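/- Let N ≥ 1 and let 0 ≤ ζ₁ ≤ ζ₂ ≤ ⋯ ≤ ζ_N ≤ 1 be a nondecreasing sequence. Define the Kolmogorov–Smirnov quantity D_N = max_{1≤i≤N} max( i/N − ζ_i, ζ_i − (i−1)/N ) and the Cramér–von Mises quantity W_N² = 1/(12N²) + (1/N) Σ_{i=1}^N ( ζ_i − (2i−1)/(2N) )². Then D_N² ≤ max{ 1/√N + 3/(2N), √N · W_N² + 2/√N }. -/

import Mathlib

open scoped BigOperators


lemma keyA {D c x : ℝ} (hD : 0 ≤ D) (hc : 0 ≤ c) (h : D - c ≤ x) :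
    D^2 - 2*D*c ≤ x^2 := by
  rcases le_or_gt D c with h1 | h1
  · nlinarith
  · nlinarith [sq_nonneg (x - D + c)]

lemma keyC (k : ℕ) : ∑ m ∈ Finset.range k, (2*(m:ℝ)+1) = (k:ℝ)^2 := by
  induction k with
  | zero => simp
  | succ n ih => rw [Finset.sum_range_succ, ih]; push_cast; ring

lemma keyB {k N : ℕ} (hN : 0 < N) {D : ℝ} (hD : 0 ≤ D) (g : ℕ → ℝ)
    (h : ∀ m < k, D - (2*(m:ℝ)+1)/(2*N) ≤ g m) :
    (k:ℝ)*D^2 - D*(k:ℝ)^2/N ≤ ∑ m ∈ Finset.range k, (g m)^2 := by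
  have hN0 : (0:ℝ) < N := by exact_mod_cast hN
  have hsum : ∑ m ∈ Finset.range k, (D^2 - 2*D*((2*(m:ℝ)+1)/(2*N)))
      = (k:ℝ)*D^2 - D*(k:ℝ)^2/N := by
    have h2 : ∀ m : ℕ, D^2 - 2*D*((2*(m:ℝ)+1)/(2*N)) = D^2 - (D/N)*(2*(m:ℝ)+1) := by
      intro m; field_simp
    simp_rw [h2]
    rw [Finset.sum_sub_distrib, Finset.sum_const, Finset.card_range, ← Finset.mul_sum, keyC]
    ring
  have h1 : ∀ m ∈ Finset.range k, D^2 - 2*D*((2*(m:ℝ)+1)/(2*N)) ≤ (g m)^2 := by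
    intro m hm
    exact keyA hD (by positivity) (h m (Finset.mem_range.mp hm))
  calc (k:ℝ)*D^2 - D*(k:ℝ)^2/N = _ := hsum.symm
    _ ≤ _ := Finset.sum_le_sum h1


lemma keyD {N k : ℕ} (F : Fin N → ℝ) (hF : ∀ j, 0 ≤ F j) (f : ℕ → Fin N)
    (hinj : ∀ m₁ < k, ∀ m₂ < k, f m₁ = f m₂ → m₁ = m₂) (g : ℕ → ℝ)
    (hg : ∀ m < k, (g m)^2 = F (f m)) :
    ∑ m ∈ Finset.range k, (g m)^2 ≤ ∑ j : Fin N, F j := by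
  have h1 : ∑ m ∈ Finset.range k, (g m)^2 = ∑ m ∈ Finset.range k, F (f m) :=
    Finset.sum_congr rfl (fun m hm => hg m (Finset.mem_range.mp hm))
  have h2 : ∑ m ∈ (Finset.range k).image f, F m = ∑ m ∈ Finset.range k, F (f m) :=
    Finset.sum_image (fun x hx y hy hxy =>
      hinj x (Finset.mem_range.mp hx) y (Finset.mem_range.mp hy) hxy)
  rw [h1, ← h2]
  exact Finset.sum_le_sum_of_subset_of_nonneg (Finset.subset_univ _) (fun j _ _ => hF j)

set_option maxHeartbeats 2000000 in

/-- the Kolmogorov–Smirnov quantity is controlled by the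
Cramér–von Mises quantity.  For a nondecreasing sequence `0 ≤ ζ₁ ≤ ⋯ ≤ ζ_N ≤ 1`,
letting `D_N = max_i max(i/N − ζ_i, ζ_i − (i−1)/N)` and
`W_N² = 1/(12N²) + (1/N)∑_i (ζ_i − (2i−1)/(2N))²`, one has
`D_N² ≤ max(1/√N + 3/(2N), √N·W_N² + 2/√N)`. -/
theorem stmt14 (N : ℕ) (hN : 0 < N) (ζ : Fin N → ℝ) (hmono : Monotone ζ)
    (h0 : ∀ i, 0 ≤ ζ i) (h1 : ∀ i, ζ i ≤ 1) :
    (Finset.univ.sup' ⟨⟨0, hN⟩, Finset.mem_univ _⟩ (fun i : Fin N =>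
        max ((((i : ℕ) : ℝ) + 1) / N - ζ i) (ζ i - ((i : ℕ) : ℝ) / N)))^2
      ≤ max (1 / Real.sqrt N + 3 / (2 * N))
          (Real.sqrt N *
              (1 / (12 * (N : ℝ)^2) +
                (1 / N) * ∑ i : Fin N, (ζ i - (2 * ((i : ℕ) : ℝ) + 1) / (2 * N))^2) +
            2 / Real.sqrt N) := by
  have hN0 : (0:ℝ) < N := by exact_mod_cast hN
  have hN1 : (1:ℝ) ≤ N := by exact_mod_cast hN
  set s := Real.sqrt N with hsdef
  clear_value s
  have hs0 : 0 < s := hsdef ▸ Real.sqrt_pos.mpr hN0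
  have hs2 : s^2 = N := hsdef ▸ Real.sq_sqrt hN0.le
  have hs1 : 1 ≤ s := by nlinarith
  obtain ⟨i, -, hi⟩ := Finset.exists_mem_eq_sup'
    (⟨⟨0, hN⟩, Finset.mem_univ _⟩ : (Finset.univ : Finset (Fin N)).Nonempty)
    (fun i : Fin N => max ((((i : ℕ) : ℝ) + 1) / N - ζ i) (ζ i - ((i : ℕ) : ℝ) / N))
  rw [hi]
  set D := max ((((i : ℕ) : ℝ) + 1) / N - ζ i) (ζ i - ((i : ℕ) : ℝ) / N) with hDdef
  clear_value D
  have hiN : ((i : ℕ) : ℝ) + 1 ≤ N := by exact_mod_cast i.2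
  have hi0 : (0:ℝ) ≤ ((i : ℕ) : ℝ) := Nat.cast_nonneg _
  have hD0 : 0 ≤ D := by
    have hab : ((((i : ℕ) : ℝ) + 1) / N - ζ i) + (ζ i - ((i : ℕ) : ℝ) / N) = 1/N := by
      field_simp; ring
    nlinarith [le_max_left ((((i : ℕ) : ℝ) + 1) / N - ζ i) (ζ i - ((i : ℕ) : ℝ) / N),
      le_max_right ((((i : ℕ) : ℝ) + 1) / N - ζ i) (ζ i - ((i : ℕ) : ℝ) / N),
      one_div_pos.mpr hN0]
  have hD1 : D ≤ 1 := by
    rw [hDdef]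
    apply max_le
    · have h2 : (((i : ℕ) : ℝ) + 1)/N ≤ 1 := by rw [div_le_one hN0]; exact hiN
      linarith [h0 i]
    · linarith [h1 i, div_nonneg hi0 hN0.le]
  rcases le_or_gt D (1/s) with hcase | hcase
  · -- small D case
    apply le_max_of_le_left
    have h2 : D^2 ≤ (1/s)^2 := by nlinarith
    have h3 : (1/s)^2 = 1/(N:ℝ) := by rw [div_pow, one_pow, hs2]
    have h4 : 1/(N:ℝ) ≤ 1/s := by
      apply one_div_le_one_div_of_le hs0; nlinarith
    have h5 : 0 < 3/(2*(N:ℝ)) := by positivity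
    linarith [h2, h3 ▸ h2]
  · -- main case
    apply le_max_of_le_right
    set k := Nat.sqrt N with hkdef
    clear_value k
    have hk1 : 1 ≤ k := hkdef ▸ Nat.sqrt_pos.mpr hN
    have hkk : ((k:ℝ))^2 ≤ N := by rw [hkdef]; exact_mod_cast Nat.sqrt_le' N
    have hkk2 : (N:ℝ) < ((k:ℝ)+1)^2 := by rw [hkdef]; exact_mod_cast Nat.lt_succ_sqrt' N
    have hks : (k:ℝ) ≤ s := by nlinarith [Nat.cast_nonneg k (α := ℝ)]
    have hsk : s ≤ (k:ℝ) + 1 := by nlinarith [Nat.cast_nonneg k (α := ℝ)]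
    have hsD : s < N * D := by
      have h2 : 1 < D * s := by rwa [div_lt_iff₀ hs0] at hcase
      nlinarith
    -- the key sum bound, proven in both subcases
    have key : (k:ℝ)*D^2 - D*(k:ℝ)^2/N
        ≤ ∑ j : Fin N, (ζ j - (2 * ((j : ℕ) : ℝ) + 1) / (2 * N))^2 := by
      rcases max_choice ((((i : ℕ) : ℝ) + 1) / N - ζ i) (ζ i - ((i : ℕ) : ℝ) / N) with hc | hc
      · -- D = (i+1)/N - ζ i : look at indices below i
        have hDa : D = (((i : ℕ) : ℝ) + 1) / N - ζ i := hDdef.trans hc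
        have e : ((i:ℕ):ℝ) + 1 - (N:ℝ) * D = N * ζ i := by
          rw [hDa]; field_simp; try ring
        have hkiR : (k:ℝ) < ((i:ℕ):ℝ) + 1 := by nlinarith [h0 i, hks, hsD]
        have hki : k ≤ (i:ℕ) := by exact_mod_cast Nat.lt_succ_iff.mp (by exact_mod_cast hkiR)
        set f : ℕ → Fin N := fun m => ⟨(i:ℕ) - m, lt_of_le_of_lt (Nat.sub_le _ _) i.2⟩ with hf
        set g : ℕ → ℝ := fun m => (2*((((f m) : Fin N):ℕ):ℝ)+1)/(2*N) - ζ (f m) with hg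
        have hgb : ∀ m < k, D - (2*(m:ℝ)+1)/(2*N) ≤ g m := by
          intro m hm
          have hmi : m ≤ (i:ℕ) := le_trans hm.le hki
          have hζ : ζ (f m) ≤ ζ i := hmono (by
            rw [Fin.le_def]; exact Nat.sub_le _ _)
          have hcast : ((((f m) : Fin N):ℕ):ℝ) = ((i:ℕ):ℝ) - (m:ℝ) := by
            simp only [hf]
            exact Nat.cast_sub hmi
          have hid : (2*(((i:ℕ):ℝ) - (m:ℝ))+1)/(2*(N:ℝ)) - (((i:ℕ):ℝ)+1)/N
              = -(2*(m:ℝ)+1)/(2*(N:ℝ)) := by field_simp; ring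
          simp only [hg]
          rw [hcast]
          have : -(2*(m:ℝ)+1)/(2*(N:ℝ)) = -((2*(m:ℝ)+1)/(2*(N:ℝ))) := by ring
          rw [this] at hid
          linarith [hDa, hζ, hid]
        have hB := keyB hN hD0 g hgb
        refine hB.trans (keyD _ (fun j => sq_nonneg _) f ?_ g ?_)
        · intro m₁ hm₁ m₂ hm₂ hf12
          have : (i:ℕ) - m₁ = (i:ℕ) - m₂ := by
            simpa [hf, Fin.ext_iff] using hf12
          omega
        · intro m hm
          simp only [hg]
          try ring
      · -- D = ζ i - i/N : look at indices above i
        have hDb : D = ζ i - ((i : ℕ) : ℝ) / N := hDdef.trans hc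
        have e : ((i:ℕ):ℝ) + (N:ℝ) * D = N * ζ i := by
          rw [hDb]; field_simp; try ring
        have hikR : ((i:ℕ):ℝ) + (k:ℝ) < N := by nlinarith [h1 i, hks, hsD]
        have hik : (i:ℕ) + k ≤ N := by exact_mod_cast hikR.le
        set f : ℕ → Fin N := fun m => ⟨((i:ℕ) + m) % N, Nat.mod_lt _ hN⟩ with hf
        set g : ℕ → ℝ := fun m => ζ (f m) - (2*((((f m) : Fin N):ℕ):ℝ)+1)/(2*N) with hg
        have hmod : ∀ m < k, ((i:ℕ) + m) % N = (i:ℕ) + m := by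
          intro m hm; exact Nat.mod_eq_of_lt (by omega)
        have hgb : ∀ m < k, D - (2*(m:ℝ)+1)/(2*N) ≤ g m := by
          intro m hm
          have hζ : ζ i ≤ ζ (f m) := hmono (by
            rw [Fin.le_def]; simp only [hf]; rw [hmod m hm]; omega)
          have hcast : ((((f m) : Fin N):ℕ):ℝ) = ((i:ℕ):ℝ) + (m:ℝ) := by
            simp only [hf]; rw [hmod m hm]; push_cast; ring
          have hid : (2*(((i:ℕ):ℝ) + (m:ℝ))+1)/(2*(N:ℝ))
              = ((i:ℕ):ℝ)/N + (2*(m:ℝ)+1)/(2*(N:ℝ)) := by field_simp; ring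
          simp only [hg]
          rw [hcast, hid]
          linarith [hDb, hζ]
        have hB := keyB hN hD0 g hgb
        refine hB.trans (keyD _ (fun j => sq_nonneg _) f ?_ g ?_)
        · intro m₁ hm₁ m₂ hm₂ hf12
          have : ((i:ℕ) + m₁) % N = ((i:ℕ) + m₂) % N := by
            simpa [hf, Fin.ext_iff] using hf12
          rw [hmod m₁ hm₁, hmod m₂ hm₂] at this
          omega
        · intro m hm
          simp only [hg]
          try ring
    -- final arithmetic
    have hSS0 : 0 ≤ ∑ j : Fin N, (ζ j - (2 * ((j : ℕ) : ℝ) + 1) / (2 * N))^2 :=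
      Finset.sum_nonneg fun j _ => sq_nonneg _
    set SS := ∑ j : Fin N, (ζ j - (2 * ((j : ℕ) : ℝ) + 1) / (2 * N))^2 with hSSdef
    clear_value SS
    have h2 : D*(k:ℝ)^2/N ≤ 1 := by
      rw [div_le_one hN0]; nlinarith
    have e1 : s*D^2 ≤ ((k:ℝ)+1)*D^2 := mul_le_mul_of_nonneg_right hsk (sq_nonneg D)
    clear hi hmono h0 h1 hSSdef hDdef hsdef hkdef
    have e2 : D^2 ≤ 1 := by
      have := pow_le_pow_left₀ hD0 hD1 2
      simpa using this
    have h3 : s*D^2 ≤ SS + 2 := by linarith [key, h2, e1, e2]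
    rw [← mul_le_mul_iff_of_pos_right hs0]
    have hRHS : (s * (1/(12*(N:ℝ)^2) + (1/N) * SS) + 2/s) * s
        = s^2 * (1/(12*(N:ℝ)^2) + (1/N) * SS) + 2 := by
      field_simp
    rw [hRHS, hs2]
    have h4 : (N:ℝ) * (1/(12*(N:ℝ)^2) + (1/N) * SS) = 1/(12*(N:ℝ)) + SS := by
      field_simp
    rw [h4]
    have h5 : 0 < 1/(12*(N:ℝ)) := by positivity
    nlinarith [h3, h5]
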